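/- Let A_1, ..., A_N be skew-adjoint matrices with ‖A_j‖ = a_j. If Ψ(h) = χ(α_1h)χ*(α_2h)···χ(α_2h)χ*(α_1h) is a time-symmetric 2s-stage composition of even order p (with palindromic coefficients α_{2s+1−j} = α_j), where χ(h) = e^{hA_1}···e^{hA_N} and χ*(h) = e^{hA_N}···e^{hA_1}, then ‖Ψ(h) − e^{hΣA_j}‖ ≤ (2^{−p}/(p+1)!)(1 + 2Σ_{i=1}^{s}|α_i|)^{p+1} (h Σ_j a_j)^{p+1} for all h ≥ 0. -/

import Mathlib

open scoped Matrix Matrix.Norms.L2Operator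
open NormedSpace

namespace PalAux

noncomputable section

variable {n : ℕ}

local notation "Mat" => Matrix (Fin n) (Fin n) ℂ

instance instNormedAlgebraRatMat : NormedAlgebra ℚ Mat := NormedAlgebra.restrictScalars ℚ ℂ Mat

lemma norm_one_le : ‖(1 : Mat)‖ ≤ 1 := by
  have h := CStarRing.norm_star_mul_self (x := (1 : Mat))
  simp only [star_one, one_mul] at h
  nlinarith [norm_nonneg (1 : Mat)]

lemma exp_unitary {B : Mat} (hB : star B = -B) (t : ℝ) :
    exp (t • B) ∈ unitary Mat := by
  apply exp_mem_unitary_of_mem_skewAdjoint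
  rw [skewAdjoint.mem_iff, star_smul, star_trivial, hB, smul_neg]

/-- The basic smoothness+bound predicate. -/
def Good (S : ℝ) (f : ℝ → Mat) : Prop :=
  0 ≤ S ∧ ContDiff ℝ ((⊤ : ℕ∞) : WithTop ℕ∞) f ∧
    ∀ (m : ℕ) (t : ℝ), ‖iteratedDeriv m f t‖ ≤ S ^ m

lemma iteratedDeriv_exp_smul (B : Mat) (m : ℕ) :
    iteratedDeriv m (fun t : ℝ => exp (t • B)) = fun t => exp (t • B) * B ^ m := by
  induction m with
  | zero => funext t; simp
  | succ m ih =>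
    funext t
    rw [iteratedDeriv_succ, ih]
    have h1 : HasDerivAt (fun t : ℝ => exp (t • B) * B ^ m)
        (exp (t • B) * B ^ (m + 1)) t := by
      have h2 := (hasDerivAt_exp_smul_const (𝕂 := ℝ) B t).mul_const (B ^ m)
      refine h2.congr_deriv ?_
      symm
      rw [mul_assoc, ← pow_succ']
    exact h1.deriv

lemma smooth_exp_smul (B : Mat) :
    ContDiff ℝ ((⊤ : ℕ∞) : WithTop ℕ∞) (fun t : ℝ => exp (t • B)) := by
  rw [contDiff_iff_iteratedDeriv]
  have hd : ∀ m : ℕ, Differentiable ℝ (iteratedDeriv m (fun t : ℝ => exp (t • B))) := by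
    intro m
    rw [iteratedDeriv_exp_smul]
    exact fun t => ((hasDerivAt_exp_smul_const (𝕂 := ℝ) B t).mul_const (B ^ m)).differentiableAt
  exact ⟨fun m _ => (hd m).continuous, fun m _ => hd m⟩

lemma good_exp {B : Mat} (hB : star B = -B) : Good ‖B‖ (fun t : ℝ => exp (t • B)) := by
  refine ⟨norm_nonneg B, smooth_exp_smul B, ?_⟩
  intro m t
  rw [iteratedDeriv_exp_smul, CStarRing.norm_mem_unitary_mul _ (exp_unitary hB t)]
  cases m with
  | zero => simpa using norm_one_le
  | succ m => exact norm_pow_le' B m.succ_pos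

lemma Good.mul {S1 S2 : ℝ} {f g : ℝ → Mat} (hf : Good S1 f) (hg : Good S2 g) :
    Good (S1 + S2) (fun t => f t * g t) := by
  obtain ⟨hS1, hf1, hf2⟩ := hf; obtain ⟨hS2, hg1, hg2⟩ := hg
  refine ⟨by positivity, hf1.mul hg1, ?_⟩
  intro m t
  rw [← norm_iteratedFDeriv_eq_norm_iteratedDeriv]
  calc ‖iteratedFDeriv ℝ m (fun y => f y * g y) t‖
      ≤ ∑ i ∈ Finset.range (m + 1), (m.choose i : ℝ) * ‖iteratedFDeriv ℝ i f t‖ *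
          ‖iteratedFDeriv ℝ (m - i) g t‖ :=
        norm_iteratedFDeriv_mul_le hf1 hg1 t (by exact_mod_cast le_top)
    _ ≤ ∑ i ∈ Finset.range (m + 1), (m.choose i : ℝ) * S1 ^ i * S2 ^ (m - i) := by
        apply Finset.sum_le_sum
        intro i _
        rw [norm_iteratedFDeriv_eq_norm_iteratedDeriv,
          norm_iteratedFDeriv_eq_norm_iteratedDeriv]
        gcongr
        · exact hf2 i t
        · exact hg2 (m - i) t
    _ = (S1 + S2) ^ m := by
        rw [add_pow]
        apply Finset.sum_congr rfl
        intro i _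
        ring

lemma Good.of_le {S S' : ℝ} {f : ℝ → Mat} (hf : Good S f) (h : S ≤ S') : Good S' f := by
  obtain ⟨hS, h1, h2⟩ := hf
  exact ⟨le_trans hS h, h1, fun m t => (h2 m t).trans (pow_le_pow_left₀ hS h m)⟩

lemma iteratedDeriv_const (m : ℕ) (c : Mat) :
    iteratedDeriv m (fun _ : ℝ => c) = fun _ => if m = 0 then c else 0 := by
  induction m generalizing c with
  | zero => simp
  | succ m ih =>
    rw [iteratedDeriv_succ']
    have : deriv (fun _ : ℝ => c) = fun _ : ℝ => (0 : Mat) := by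
      funext t; exact deriv_const t c
    rw [this, ih 0]
    simp

lemma good_one : Good 0 (fun _ : ℝ => (1 : Mat)) := by
  refine ⟨le_refl _, contDiff_const, ?_⟩
  intro m t
  rw [iteratedDeriv_const]
  cases m with
  | zero => simpa using norm_one_le
  | succ m => simp

lemma good_prod {m : ℕ} (g : Fin m → ℝ → Mat) (S : Fin m → ℝ) (h : ∀ i, Good (S i) (g i)) :
    Good (∑ i, S i) (fun t => (List.ofFn fun i => g i t).prod) := by
  induction m with
  | zero => simpa using good_one
  | succ m ih =>
    simp only [List.ofFn_succ, List.prod_cons]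
    rw [Fin.sum_univ_succ]
    exact (h 0).mul (ih _ _ fun i => h i.succ)

lemma good_prod_rev {m : ℕ} (g : Fin m → ℝ → Mat) (S : Fin m → ℝ) (h : ∀ i, Good (S i) (g i)) :
    Good (∑ i, S i) (fun t => (List.ofFn fun i => g i t).reverse.prod) := by
  induction m with
  | zero => simpa using good_one
  | succ m ih =>
    simp only [List.ofFn_succ, List.reverse_cons, List.prod_append, List.prod_cons,
      List.prod_nil, mul_one]
    rw [Fin.sum_univ_succ, add_comm]
    exact (ih _ _ fun i => h i.succ).mul (h 0)


lemma vanish_mul_right {f g : ℝ → Mat}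
    (hf : ContDiff ℝ ((⊤ : ℕ∞) : WithTop ℕ∞) f) (hg : ContDiff ℝ ((⊤ : ℕ∞) : WithTop ℕ∞) g)
    {p : ℕ} (h0 : ∀ k ≤ p, iteratedDeriv k f 0 = 0) :
    ∀ k ≤ p, iteratedDeriv k (fun t => f t * g t) 0 = 0 := by
  intro k hk
  have hb : ‖iteratedDeriv k (fun t => f t * g t) 0‖ ≤ 0 := by
    rw [← norm_iteratedFDeriv_eq_norm_iteratedDeriv]
    refine (norm_iteratedFDeriv_mul_le hf hg 0 (by exact_mod_cast le_top)).trans (le_of_eq ?_)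
    apply Finset.sum_eq_zero
    intro i hi
    have hip : i ≤ p := le_trans (Nat.lt_succ_iff.mp (Finset.mem_range.mp hi)) hk
    rw [norm_iteratedFDeriv_eq_norm_iteratedDeriv, h0 i hip, norm_zero]
    ring
  exact norm_le_zero_iff.mp hb

lemma vanish_mul_left {f g : ℝ → Mat}
    (hf : ContDiff ℝ ((⊤ : ℕ∞) : WithTop ℕ∞) f) (hg : ContDiff ℝ ((⊤ : ℕ∞) : WithTop ℕ∞) g)
    {p : ℕ} (h0 : ∀ k ≤ p, iteratedDeriv k f 0 = 0) :
    ∀ k ≤ p, iteratedDeriv k (fun t => g t * f t) 0 = 0 := by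
  intro k hk
  have hb : ‖iteratedDeriv k (fun t => g t * f t) 0‖ ≤ 0 := by
    rw [← norm_iteratedFDeriv_eq_norm_iteratedDeriv]
    refine (norm_iteratedFDeriv_mul_le hg hf 0 (by exact_mod_cast le_top)).trans (le_of_eq ?_)
    apply Finset.sum_eq_zero
    intro i hi
    have hip : k - i ≤ p := le_trans (Nat.sub_le _ _) hk
    rw [norm_iteratedFDeriv_eq_norm_iteratedDeriv (n := k - i), h0 _ hip, norm_zero]
    ring
  exact norm_le_zero_iff.mp hb

lemma taylor_bound {C : ℝ} :
    ∀ (p : ℕ) (f : ℝ → Mat), ContDiff ℝ ((⊤ : ℕ∞) : WithTop ℕ∞) f →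
    (∀ k ≤ p, iteratedDeriv k f 0 = 0) →
    (∀ t : ℝ, ‖iteratedDeriv (p + 1) f t‖ ≤ C) →
    ∀ x : ℝ, 0 ≤ x → ‖f x‖ ≤ C * x ^ (p + 1) / (p + 1).factorial := by
  intro p
  induction p with
  | zero =>
    intro f hf h0 hD x hx
    have hdiff : Differentiable ℝ f := hf.differentiable (by simp)
    have key : ∀ y ∈ Set.Icc (0:ℝ) x, ‖f y‖ ≤ C * y := by
      refine image_norm_le_of_norm_deriv_right_le_deriv_boundary
        (f' := deriv f) (B' := fun _ => C)
        hf.continuous.continuousOn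
        (fun y _ => (hdiff y).hasDerivAt.hasDerivWithinAt) ?_ ?_ ?_
      · have : f 0 = 0 := by simpa using h0 0 le_rfl
        simp [this]
      · intro y
        simpa using (hasDerivAt_id y).const_mul C
      · intro y _
        have := hD y
        rwa [iteratedDeriv_one] at this
    have := key x (Set.right_mem_Icc.mpr hx)
    simpa using this
  | succ p ih =>
    intro f hf h0 hD x hx
    have hdiff : Differentiable ℝ f := hf.differentiable (by simp)
    have hf' : ContDiff ℝ ((⊤ : ℕ∞) : WithTop ℕ∞) (deriv f) :=
      (contDiff_infty_iff_deriv.mp hf).2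
    have h0' : ∀ k ≤ p, iteratedDeriv k (deriv f) 0 = 0 := by
      intro k hk
      rw [← iteratedDeriv_succ']
      exact h0 (k + 1) (by omega)
    have hD' : ∀ t : ℝ, ‖iteratedDeriv (p + 1) (deriv f) t‖ ≤ C := by
      intro t
      rw [← iteratedDeriv_succ']
      exact hD t
    have ihd := ih (deriv f) hf' h0' hD'
    have key : ∀ y ∈ Set.Icc (0:ℝ) x, ‖f y‖ ≤ C / (p + 2).factorial * y ^ (p + 2) := by
      refine image_norm_le_of_norm_deriv_right_le_deriv_boundary
        (f' := deriv f) (B' := fun y => C * y ^ (p + 1) / (p + 1).factorial)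
        hf.continuous.continuousOn
        (fun y _ => (hdiff y).hasDerivAt.hasDerivWithinAt) ?_ ?_ ?_
      · have : f 0 = 0 := by simpa using h0 0 (Nat.zero_le _)
        simp [this]
      · intro y
        have h1 := (hasDerivAt_pow (p + 2) y).const_mul (C / (p + 2).factorial)
        refine h1.congr_deriv ?_
        symm
        have h2 : ((p + 2).factorial : ℝ) = (p + 2) * (p + 1).factorial := by
          rw [Nat.factorial_succ]; push_cast; ring
        rw [h2]
        rw [show p + 2 - 1 = p + 1 by omega]
        push_cast
        have h3 : (((p + 1).factorial : ℝ)) ≠ 0 := by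
          exact_mod_cast (p + 1).factorial_ne_zero
        field_simp
      · intro y hy
        exact ihd y hy.1
    have := key x (Set.right_mem_Icc.mpr hx)
    calc ‖f x‖ ≤ C / (p + 2).factorial * x ^ (p + 2) := this
      _ = C * x ^ (p + 1 + 1) / (p + 1 + 1).factorial := by ring_nf

lemma ofFn_eq {β : Type*} {m : ℕ} {f g : Fin m → β} (h : ∀ i, f i = g i) :
    List.ofFn f = List.ofFn g :=
  congrArg List.ofFn (funext h)

lemma prod_mul_rev_prod_eq_one {M : Type*} [Monoid M] :
    ∀ {m : ℕ} (f g : Fin m → M), (∀ i, f i * g i = 1) →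
      (List.ofFn f).prod * (List.ofFn g).reverse.prod = 1 := by
  intro m
  induction m with
  | zero => intro f g _; simp
  | succ m ih =>
    intro f g h
    simp only [List.ofFn_succ, List.prod_cons, List.reverse_cons, List.prod_append,
      List.prod_cons, List.prod_nil, mul_one]
    calc f 0 * (List.ofFn fun i => f i.succ).prod *
          ((List.ofFn fun i => g i.succ).reverse.prod * g 0)
        = f 0 * ((List.ofFn fun i => f i.succ).prod *
            (List.ofFn fun i => g i.succ).reverse.prod) * g 0 := by
          simp only [mul_assoc]
      _ = f 0 * g 0 := by rw [ih _ _ fun i => h i.succ, mul_one]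
      _ = 1 := h 0

lemma rev_prod_mul_prod_eq_one {M : Type*} [Monoid M] :
    ∀ {m : ℕ} (f g : Fin m → M), (∀ i, f i * g i = 1) →
      (List.ofFn f).reverse.prod * (List.ofFn g).prod = 1 := by
  intro m
  induction m with
  | zero => intro f g _; simp
  | succ m ih =>
    intro f g h
    simp only [List.ofFn_succ, List.prod_cons, List.reverse_cons, List.prod_append,
      List.prod_cons, List.prod_nil, mul_one]
    calc (List.ofFn fun i => f i.succ).reverse.prod * f 0 *
          (g 0 * (List.ofFn fun i => g i.succ).prod)
        = (List.ofFn fun i => f i.succ).reverse.prod * (f 0 * g 0) *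
            (List.ofFn fun i => g i.succ).prod := by simp only [mul_assoc]
      _ = (List.ofFn fun i => f i.succ).reverse.prod *
            (List.ofFn fun i => g i.succ).prod := by rw [h 0, mul_one]
      _ = 1 := ih _ _ fun i => h i.succ

lemma sum_abs_shift (α : ℕ → ℝ) (s : ℕ) :
    ∑ i : Fin s, |α (s - (i : ℕ))| = ∑ i ∈ Finset.Icc 1 s, |α i| := by
  rw [Fin.sum_univ_eq_sum_range (fun i => |α (s - i)|) s]
  have h1 : ∑ i ∈ Finset.range s, |α (s - i)| = ∑ i ∈ Finset.range s, |α (i + 1)| := by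
    have := Finset.sum_range_reflect (fun j => |α (j + 1)|) s
    rw [← this]
    apply Finset.sum_congr rfl
    intro i hi
    have : i < s := Finset.mem_range.mp hi
    congr 2
    omega
  rw [h1]
  have h2 : Finset.Icc 1 s = Finset.Ico 1 (s + 1) := by
    rw [Finset.Ico_add_one_right_eq_Icc]
  rw [h2, Finset.sum_Ico_eq_sum_range]
  apply Finset.sum_congr (by simp) (fun i _ => by rw [add_comm])


end

end PalAux
open PalAux PalAux

/-- Improved local error bound for time-symmetric (palindromic)
compositions of the Lie–Trotter scheme and its adjoint, of even order p. -/
theorem palindromic_composition_local_error_bound {n N s p : ℕ}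
    (A : Fin N → Matrix (Fin n) (Fin n) ℂ)
    (a : Fin N → ℝ) (ha : ∀ i, ‖A i‖ = a i)
    (hskew : ∀ i, (A i)ᴴ = -(A i))
    (α : ℕ → ℝ)
    (hpal : ∀ j ∈ Finset.Icc 1 (2 * s), α (2 * s + 1 - j) = α j)
    (χ χs Ψ : ℝ → Matrix (Fin n) (Fin n) ℂ)
    (hχ : ∀ t : ℝ, χ t = (List.ofFn fun i : Fin N => exp (t • A i)).prod)
    (hχs : ∀ t : ℝ, χs t = (List.ofFn fun i : Fin N => exp (t • A i)).reverse.prod)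
    (hΨ : ∀ h : ℝ, Ψ h =
      (List.ofFn fun k : Fin s =>
        χ (α (2 * (k : ℕ) + 2) * h) * χs (α (2 * (k : ℕ) + 1) * h)).reverse.prod)
    (hp : Even p)
    (horder : ∀ k ≤ p,
      iteratedDeriv k (fun h : ℝ => Ψ h - exp (h • ∑ i, A i)) 0 = 0) :
    ∀ h : ℝ, 0 ≤ h →
      ‖Ψ h - exp (h • ∑ i, A i)‖ ≤
        (1 / 2 ^ p : ℝ) / (p + 1).factorial *
          (1 + 2 * ∑ i ∈ Finset.Icc 1 s, |α i|) ^ (p + 1) *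
            (h * ∑ j, a j) ^ (p + 1) := by
  intro h h0
  set X : Matrix (Fin n) (Fin n) ℂ := ∑ i, A i with hX
  set S : ℝ := ∑ j, a j with hSdef
  set c : ℝ := ∑ i ∈ Finset.Icc 1 s, |α i| with hcdef
  -- basic positivity and skewness facts
  have hstar : ∀ i, star (A i) = -(A i) := fun i => hskew i
  have hXstar : star X = -X := by
    rw [hX, star_sum]
    simp only [hstar]
    exact (Finset.sum_neg_distrib (s := Finset.univ) (f := A))
  have ha0 : ∀ i, 0 ≤ a i := fun i => (ha i) ▸ norm_nonneg _
  have hS0 : 0 ≤ S := Finset.sum_nonneg fun i _ => ha0 i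
  have hc0 : 0 ≤ c := Finset.sum_nonneg fun i _ => abs_nonneg _
  have hXn : ‖X‖ ≤ S := by
    rw [hX, hSdef]
    refine (norm_sum_le _ _).trans_eq ?_
    exact Finset.sum_congr rfl fun i _ => ha i
  -- Good facts for the building blocks
  have goodA : ∀ (r : ℝ) (i : Fin N), Good (|r| * a i) (fun t : ℝ => exp (t • (r • A i))) := by
    intro r i
    have hsk : star (r • A i) = -(r • A i) := by
      rw [star_smul, star_trivial, hstar i, smul_neg]
    have hnr : ‖r • A i‖ = |r| * a i := by rw [norm_smul, Real.norm_eq_abs, ha i]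
    have hg := good_exp hsk
    rwa [hnr] at hg
  have goodχ : ∀ r : ℝ, Good (|r| * S) (fun t => χ (r * t)) := by
    intro r
    have he : (fun t : ℝ => χ (r * t)) =
        fun t => (List.ofFn fun i : Fin N => exp (t • (r • A i))).prod := by
      funext t
      rw [hχ (r * t)]
      refine congrArg List.prod (ofFn_eq fun i => ?_)
      rw [smul_smul, mul_comm r t]
    rw [he]
    have hg := good_prod (fun (i : Fin N) (t : ℝ) => exp (t • (r • A i)))
      (fun i => |r| * a i) (fun i => goodA r i)
    have hsum : (∑ i : Fin N, |r| * a i) = |r| * S := by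
      rw [hSdef, Finset.mul_sum]
    rwa [hsum] at hg
  have goodχs : ∀ r : ℝ, Good (|r| * S) (fun t => χs (r * t)) := by
    intro r
    have he : (fun t : ℝ => χs (r * t)) =
        fun t => (List.ofFn fun i : Fin N => exp (t • (r • A i))).reverse.prod := by
      funext t
      rw [hχs (r * t)]
      refine congrArg List.prod (congrArg List.reverse (ofFn_eq fun i => ?_))
      rw [smul_smul, mul_comm r t]
    rw [he]
    have hg := good_prod_rev (fun (i : Fin N) (t : ℝ) => exp (t • (r • A i)))
      (fun i => |r| * a i) (fun i => goodA r i)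
    have hsum : (∑ i : Fin N, |r| * a i) = |r| * S := by
      rw [hSdef, Finset.mul_sum]
    rwa [hsum] at hg
  -- the blocks of the palindromic product
  set Bl : ℕ → ℝ → Matrix (Fin n) (Fin n) ℂ :=
    fun j t => if j % 2 = 1 then χs (α j * t) else χ (α j * t) with hBl
  have goodBl : ∀ j, Good (|α j| * S) (Bl j) := by
    intro j
    by_cases hj : j % 2 = 1
    · have he : Bl j = fun t => χs (α j * t) := by funext t; simp only [hBl, if_pos hj]
      rw [he]; exact goodχs (α j)
    · have he : Bl j = fun t => χ (α j * t) := by funext t; simp only [hBl, if_neg hj]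
      rw [he]; exact goodχ (α j)
  set Φ : ℝ → Matrix (Fin n) (Fin n) ℂ :=
    fun t => (List.ofFn fun i : Fin s => Bl (s - (i : ℕ)) t).prod with hΦ
  have goodΦ : Good (c * S) Φ := by
    have hg := good_prod (fun (i : Fin s) => Bl (s - (i : ℕ)))
      (fun i => |α (s - (i : ℕ))| * S) (fun i => goodBl _)
    have hsum : (∑ i : Fin s, |α (s - (i : ℕ))| * S) = c * S := by
      rw [← Finset.sum_mul, sum_abs_shift α s, hcdef]
    rwa [hsum] at hg
  set Y : Matrix (Fin n) (Fin n) ℂ := (-(1/2) : ℝ) • X with hY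
  have hYstar : star Y = -Y := by rw [hY, star_smul, star_trivial, hXstar, smul_neg]
  set En : ℝ → Matrix (Fin n) (Fin n) ℂ := fun t => exp (t • Y) with hEn
  have goodEn : Good (S / 2) En := by
    refine (good_exp hYstar).of_le ?_
    rw [hY, norm_smul, Real.norm_eq_abs]
    have : |(-(1/2) : ℝ)| = 1/2 := by norm_num
    rw [this]
    linarith
  set w : ℝ → Matrix (Fin n) (Fin n) ℂ := fun t => Φ t * En t with hw
  have goodw : Good (c * S + S / 2) w := goodΦ.mul goodEn
  -- exponential algebra
  have hcomm : ∀ (u v : ℝ) (B : Matrix (Fin n) (Fin n) ℂ),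
      exp (u • B) * exp (v • B) = exp ((u + v) • B) := by
    intro u v B
    rw [add_smul, exp_add_of_commute (((Commute.refl B).smul_left u).smul_right v)]
  have hExpCancel : ∀ (u : ℝ) (B : Matrix (Fin n) (Fin n) ℂ),
      exp ((-u) • B) * exp (u • B) = 1 := by
    intro u B
    rw [hcomm, neg_add_cancel, zero_smul, exp_zero]
  have hχχs : ∀ u : ℝ, χ (-u) * χs u = 1 := by
    intro u
    rw [hχ, hχs]
    exact prod_mul_rev_prod_eq_one _ _ fun i => by
      rw [show (-u : ℝ) • A i = -(u • A i) from neg_smul u (A i), ← neg_smul]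
      exact hExpCancel u (A i)
  have hχsχ : ∀ u : ℝ, χs (-u) * χ u = 1 := by
    intro u
    rw [hχ, hχs]
    exact rev_prod_mul_prod_eq_one _ _ fun i => by
      rw [show (-u : ℝ) • A i = -(u • A i) from neg_smul u (A i), ← neg_smul]
      exact hExpCancel u (A i)
  have hpair : ∀ (t : ℝ) (j : ℕ), 1 ≤ j → j ≤ s →
      Bl j (-t) * Bl (2 * s + 1 - j) t = 1 := by
    intro t j hj1 hjs
    have hmem : j ∈ Finset.Icc 1 (2 * s) := Finset.mem_Icc.mpr ⟨hj1, by omega⟩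
    have hα := hpal j hmem
    rcases Nat.even_or_odd j with he | ho
    · have h1 : ¬ (j % 2 = 1) := by
        have := Nat.even_iff.mp he; omega
      have h2 : (2 * s + 1 - j) % 2 = 1 := by
        have := Nat.even_iff.mp he; omega
      have hBl1 : Bl j (-t) = χ (-(α j * t)) := by
        simp only [hBl, if_neg h1, mul_neg]
      have hBl2 : Bl (2 * s + 1 - j) t = χs (α j * t) := by
        simp only [hBl, if_pos h2, hα]
      rw [hBl1, hBl2]
      exact hχχs _
    · have h1 : j % 2 = 1 := Nat.odd_iff.mp ho
      have h2 : ¬ ((2 * s + 1 - j) % 2 = 1) := by omega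
      have hBl1 : Bl j (-t) = χs (-(α j * t)) := by
        simp only [hBl, if_pos h1, mul_neg]
      have hBl2 : Bl (2 * s + 1 - j) t = χ (α j * t) := by
        simp only [hBl, if_neg h2, hα]
      rw [hBl1, hBl2]
      exact hχsχ _
  -- the inductive cancellation
  have hCc : ∀ (t : ℝ) (m : ℕ), m ≤ s →
      (List.ofFn fun i : Fin m => Bl (m - (i : ℕ)) (-t)).prod *
        (List.ofFn fun i : Fin m => Bl (2 * s - (i : ℕ)) t).prod = 1 := by
    intro t m
    induction m with
    | zero => intro _; simp
    | succ m ih =>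
      intro hms
      have hL : (List.ofFn fun i : Fin (m + 1) => Bl (m + 1 - (i : ℕ)) (-t)) =
          Bl (m + 1) (-t) :: List.ofFn fun i : Fin m => Bl (m - (i : ℕ)) (-t) := by
        rw [List.ofFn_succ]
        refine congrArg₂ List.cons ?_ (ofFn_eq fun i => ?_)
        · norm_num
        · simp only [Fin.val_succ]
          rw [show m + 1 - ((i : ℕ) + 1) = m - (i : ℕ) from by omega]
      have hR : (List.ofFn fun i : Fin (m + 1) => Bl (2 * s - (i : ℕ)) t) =
          (List.ofFn fun i : Fin m => Bl (2 * s - (i : ℕ)) t).concat (Bl (2 * s - m) t) := by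
        rw [List.ofFn_succ']
        refine congrArg₂ List.concat (ofFn_eq fun i => ?_) ?_
        · simp only [Fin.coe_castSucc]
        · simp only [Fin.val_last]
      rw [hL, hR, List.prod_cons, List.concat_eq_append, List.prod_append]
      simp only [List.prod_cons, List.prod_nil, mul_one]
      have hmid := ih (by omega)
      have hp2 : Bl (m + 1) (-t) * Bl (2 * s - m) t = 1 := by
        have hpp := hpair t (m + 1) (by omega) (by omega)
        rwa [show 2 * s + 1 - (m + 1) = 2 * s - m by omega] at hpp
      calc Bl (m + 1) (-t) * (List.ofFn fun i : Fin m => Bl (m - (i : ℕ)) (-t)).prod *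
            ((List.ofFn fun i : Fin m => Bl (2 * s - (i : ℕ)) t).prod * Bl (2 * s - m) t)
          = Bl (m + 1) (-t) * ((List.ofFn fun i : Fin m => Bl (m - (i : ℕ)) (-t)).prod *
              (List.ofFn fun i : Fin m => Bl (2 * s - (i : ℕ)) t).prod) * Bl (2 * s - m) t := by
            simp only [mul_assoc]
        _ = Bl (m + 1) (-t) * Bl (2 * s - m) t := by rw [hmid, mul_one]
        _ = 1 := hp2
  -- rewriting Ψ as a flat product of blocks
  have hT : ∀ (t : ℝ) (m : ℕ),
      (List.ofFn fun k : Fin m =>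
        χ (α (2 * (k : ℕ) + 2) * t) * χs (α (2 * (k : ℕ) + 1) * t)).reverse.prod
        = (List.ofFn fun i : Fin (2 * m) => Bl (2 * m - (i : ℕ)) t).prod := by
    intro t m
    induction m with
    | zero => simp
    | succ m ih =>
      rw [List.ofFn_succ'
        (f := fun k : Fin (m + 1) => χ (α (2 * (k : ℕ) + 2) * t) * χs (α (2 * (k : ℕ) + 1) * t))]
      rw [List.concat_eq_append, List.reverse_append, List.reverse_singleton,
        List.singleton_append, List.prod_cons]
      have hcast : (List.ofFn fun i : Fin (2 * (m + 1)) => Bl (2 * (m + 1) - (i : ℕ)) t) =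
          List.ofFn fun i : Fin (2 * m + 1 + 1) => Bl (2 * m + 2 - (i : ℕ)) t := by
        rw [List.ofFn_congr (show 2 * (m + 1) = 2 * m + 1 + 1 by ring)]
        refine ofFn_eq fun i => ?_
        simp only [Fin.coe_cast]
        rw [show 2 * (m + 1) = 2 * m + 2 from by ring]
      rw [hcast, List.ofFn_succ, List.prod_cons, List.ofFn_succ, List.prod_cons]
      have e0 : Bl (2 * m + 2 - ((0 : Fin (2 * m + 1 + 1)) : ℕ)) t = χ (α (2 * m + 2) * t) := by
        simp only [Fin.val_zero, Nat.sub_zero, hBl]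
        rw [if_neg (by omega)]
      have e1 : Bl (2 * m + 2 - (((0 : Fin (2 * m + 1)).succ : Fin (2 * m + 1 + 1)) : ℕ)) t =
          χs (α (2 * m + 1) * t) := by
        simp only [Fin.val_succ, Fin.val_zero, hBl]
        rw [show 2 * m + 2 - (0 + 1) = 2 * m + 1 by omega, if_pos (by omega)]
      have etail : (List.ofFn fun i : Fin (2 * m) =>
            Bl (2 * m + 2 - ((i.succ.succ : Fin (2 * m + 1 + 1)) : ℕ)) t) =
          List.ofFn fun i : Fin (2 * m) => Bl (2 * m - (i : ℕ)) t := by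
        refine ofFn_eq fun i => ?_
        simp only [Fin.val_succ]
        rw [show 2 * m + 2 - ((i : ℕ) + 1 + 1) = 2 * m - (i : ℕ) from by omega]
      rw [e0, e1, etail]
      have elast : χ (α (2 * ((Fin.last m : Fin (m + 1)) : ℕ) + 2) * t) *
            χs (α (2 * ((Fin.last m : Fin (m + 1)) : ℕ) + 1) * t)
          = χ (α (2 * m + 2) * t) * χs (α (2 * m + 1) * t) := by
        simp [Fin.val_last]
      have ecast2 : (List.ofFn fun i : Fin m =>
            χ (α (2 * ((i.castSucc : Fin (m + 1)) : ℕ) + 2) * t) *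
              χs (α (2 * ((i.castSucc : Fin (m + 1)) : ℕ) + 1) * t))
          = List.ofFn fun k : Fin m => χ (α (2 * (k : ℕ) + 2) * t) * χs (α (2 * (k : ℕ) + 1) * t) :=
        ofFn_eq fun i => by simp only [Fin.coe_castSucc]
      rw [elast, ecast2, ih, mul_assoc]
  have hΨ2 : ∀ t : ℝ, Ψ t = (List.ofFn fun i : Fin (2 * s) => Bl (2 * s - (i : ℕ)) t).prod :=
    fun t => (hΨ t).trans (hT t s)
  -- splitting Ψ into two halves
  have hsplit : ∀ t : ℝ, Ψ t =
      (List.ofFn fun i : Fin s => Bl (2 * s - (i : ℕ)) t).prod * Φ t := by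
    intro t
    rw [hΨ2 t, List.ofFn_congr (show 2 * s = s + s from two_mul s), List.ofFn_add,
      List.prod_append]
    refine congrArg₂ HMul.hMul
      (congrArg List.prod (ofFn_eq fun i => by simp only [Fin.coe_cast, Fin.coe_castAdd, Fin.coe_castLE])) ?_
    simp only [hΦ]
    refine congrArg List.prod (ofFn_eq fun i => ?_)
    simp only [Fin.coe_cast, Fin.coe_natAdd]
    rw [show 2 * s - (s + (i : ℕ)) = s - (i : ℕ) from by omega]
  have hΦΨ : ∀ t : ℝ, Φ (-t) * Ψ t = Φ t := by
    intro t
    rw [hsplit t, ← mul_assoc]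
    have hone : Φ (-t) * (List.ofFn fun i : Fin s => Bl (2 * s - (i : ℕ)) t).prod = 1 := by
      have := hCc t s le_rfl
      simpa only [hΦ] using this
    rw [hone, one_mul]
  -- the midpoint-conjugated identity
  have hEnEn : ∀ t : ℝ, En (-t) * En t = 1 := by
    intro t
    simp only [hEn]
    exact hExpCancel t Y
  have hEEn : ∀ t : ℝ, exp (t • X) * En t = En (-t) := by
    intro t
    simp only [hEn, hY, smul_smul]
    rw [hcomm]
    congr 1
    rw [show t + t * (-(1/2) : ℝ) = -t * (-(1/2)) by ring]
  have hwEn : ∀ t : ℝ, w (-t) * En t = Φ (-t) := by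
    intro t
    simp only [hw]
    rw [mul_assoc, hEnEn, mul_one]
  have huid : ∀ t : ℝ, w t - w (-t) =
      (w (-t) * En t) * ((Ψ t - exp (t • X)) * En t) := by
    intro t
    have e1 : (w (-t) * En t) * ((Ψ t - exp (t • X)) * En t)
        = Φ (-t) * (Ψ t * En t) - Φ (-t) * (exp (t • X) * En t) := by
      rw [hwEn t, sub_mul, mul_sub]
    have e2 : Φ (-t) * (Ψ t * En t) = w t := by
      rw [← mul_assoc, hΦΨ t]
    have e3 : Φ (-t) * (exp (t • X) * En t) = w (-t) := by
      rw [hEEn t]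
    rw [e1, e2, e3]
  -- smoothness
  have hsmΨ : ContDiff ℝ ((⊤ : ℕ∞) : WithTop ℕ∞) Ψ := by
    have he : Ψ = fun t => (List.ofFn fun i : Fin (2 * s) => Bl (2 * s - (i : ℕ)) t).prod :=
      funext hΨ2
    rw [he]
    exact (good_prod _ (fun i : Fin (2 * s) => |α (2 * s - (i : ℕ))| * S)
      (fun i => goodBl _)).2.1
  have hsmE : ContDiff ℝ ((⊤ : ℕ∞) : WithTop ℕ∞) (fun t : ℝ => exp (t • X)) :=
    smooth_exp_smul X
  have hsmf : ContDiff ℝ ((⊤ : ℕ∞) : WithTop ℕ∞) (fun t : ℝ => Ψ t - exp (t • X)) :=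
    hsmΨ.sub hsmE
  have hsmEn : ContDiff ℝ ((⊤ : ℕ∞) : WithTop ℕ∞) En := goodEn.2.1
  have hsmw : ContDiff ℝ ((⊤ : ℕ∞) : WithTop ℕ∞) w := goodw.2.1
  have hsmwneg : ContDiff ℝ ((⊤ : ℕ∞) : WithTop ℕ∞) (fun t : ℝ => w (-t)) :=
    hsmw.comp contDiff_neg
  -- vanishing of the symmetrized error function
  have hv1 : ∀ k ≤ p, iteratedDeriv k (fun t : ℝ => (Ψ t - exp (t • X)) * En t) 0 = 0 :=
    vanish_mul_right hsmf hsmEn horder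
  have hv2 : ∀ k ≤ p, iteratedDeriv k
      (fun t : ℝ => (w (-t) * En t) * ((Ψ t - exp (t • X)) * En t)) 0 = 0 :=
    vanish_mul_left (hsmf.mul hsmEn) (hsmwneg.mul hsmEn) hv1
  have hu0 : ∀ k ≤ p, iteratedDeriv k (fun t : ℝ => w t - w (-t)) 0 = 0 := by
    have he : (fun t : ℝ => w t - w (-t)) =
        fun t : ℝ => (w (-t) * En t) * ((Ψ t - exp (t • X)) * En t) := funext huid
    rw [he]
    exact hv2
  -- bound on the (p+1)-st derivative
  have hubound : ∀ t : ℝ, ‖iteratedDeriv (p + 1) (fun t : ℝ => w t - w (-t)) t‖ ≤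
      2 * (c * S + S / 2) ^ (p + 1) := by
    intro t
    have hcd : ContDiff ℝ ((p + 1 : ℕ) : WithTop ℕ∞) w := hsmw.of_le (by exact_mod_cast le_top)
    have hcd2 : ContDiff ℝ ((p + 1 : ℕ) : WithTop ℕ∞) (fun t : ℝ => -(w (-t))) :=
      (hsmwneg.of_le (by exact_mod_cast le_top)).neg
    have heq : (fun t : ℝ => w t - w (-t)) = fun t : ℝ => w t + (fun u : ℝ => -(w (-u))) t := by
      funext u
      simp [sub_eq_add_neg]
    rw [heq, ← norm_iteratedFDeriv_eq_norm_iteratedDeriv,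
      iteratedFDeriv_add_apply' hcd.contDiffAt hcd2.contDiffAt]
    refine (norm_add_le _ _).trans ?_
    have b1 : ‖iteratedFDeriv ℝ (p + 1) w t‖ ≤ (c * S + S / 2) ^ (p + 1) := by
      rw [norm_iteratedFDeriv_eq_norm_iteratedDeriv]
      exact goodw.2.2 _ t
    have b2 : ‖iteratedFDeriv ℝ (p + 1) (fun u : ℝ => -(w (-u))) t‖ ≤
        (c * S + S / 2) ^ (p + 1) := by
      rw [norm_iteratedFDeriv_eq_norm_iteratedDeriv, iteratedDeriv_fun_neg, norm_neg,
        iteratedDeriv_comp_neg, norm_smul]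
      have hone : ‖(-1 : ℝ) ^ (p + 1)‖ = 1 := by
        rw [norm_pow, norm_neg, norm_one, one_pow]
      rw [hone, one_mul]
      exact goodw.2.2 _ (-t)
    linarith
  -- Taylor estimate
  have htay := taylor_bound p (fun t : ℝ => w t - w (-t)) (hsmw.sub hsmwneg) hu0 hubound h h0
  -- unitarity
  have hχU : ∀ t : ℝ, χ t ∈ unitary (Matrix (Fin n) (Fin n) ℂ) := by
    intro t
    rw [hχ]
    apply Submonoid.list_prod_mem
    intro x hx
    simp only [List.mem_ofFn] at hx
    obtain ⟨i, rfl⟩ := hx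
    exact exp_unitary (hstar i) t
  have hχsU : ∀ t : ℝ, χs t ∈ unitary (Matrix (Fin n) (Fin n) ℂ) := by
    intro t
    rw [hχs]
    apply Submonoid.list_prod_mem
    intro x hx
    simp only [List.mem_reverse, List.mem_ofFn] at hx
    obtain ⟨i, rfl⟩ := hx
    exact exp_unitary (hstar i) t
  have hBlU : ∀ (j : ℕ) (t : ℝ), Bl j t ∈ unitary (Matrix (Fin n) (Fin n) ℂ) := by
    intro j t
    by_cases hj : j % 2 = 1
    · simp only [hBl, if_pos hj]; exact hχsU _
    · simp only [hBl, if_neg hj]; exact hχU _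
  have hΦU : ∀ t : ℝ, Φ t ∈ unitary (Matrix (Fin n) (Fin n) ℂ) := by
    intro t
    simp only [hΦ]
    apply Submonoid.list_prod_mem
    intro x hx
    simp only [List.mem_ofFn] at hx
    obtain ⟨i, rfl⟩ := hx
    exact hBlU _ _
  have hEnU : ∀ t : ℝ, En t ∈ unitary (Matrix (Fin n) (Fin n) ℂ) := by
    intro t
    simp only [hEn]
    exact exp_unitary hYstar t
  have hwU : ∀ t : ℝ, w t ∈ unitary (Matrix (Fin n) (Fin n) ℂ) := by
    intro t
    simp only [hw]
    exact mul_mem (hΦU t) (hEnU t)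
  -- transfer of the bound
  have hnorm : ‖Ψ h - exp (h • X)‖ = ‖w h - w (-h)‖ := by
    rw [huid h, CStarRing.norm_mem_unitary_mul _ (mul_mem (hwU (-h)) (hEnU h)),
      CStarRing.norm_mul_mem_unitary _ (hEnU h)]
  calc ‖Ψ h - exp (h • X)‖ = ‖w h - w (-h)‖ := hnorm
    _ ≤ 2 * (c * S + S / 2) ^ (p + 1) * h ^ (p + 1) / (p + 1).factorial := htay
    _ = (1 / 2 ^ p : ℝ) / (p + 1).factorial * (1 + 2 * c) ^ (p + 1) * (h * S) ^ (p + 1) := by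
      have e : c * S + S / 2 = (1 + 2 * c) * S / 2 := by ring
      rw [e, div_pow, mul_pow, mul_pow, pow_succ (2 : ℝ) p]
      have hf : ((p + 1).factorial : ℝ) ≠ 0 := by
        exact_mod_cast (p + 1).factorial_ne_zero
      field_simp
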